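/- Let F be a field, let V_1 and V_2 be nonzero finite-dimensional F-vector spaces, and let V = V_1 ⊗_F V_2. Let G_2 ≤ GL(V_2) be a subgroup acting absolutely irreducibly on V_2. Then the normalizer in GL(V) of the subgroup {id_{V_1} ⊗ g : g ∈ G_2} is exactly {h ⊗ h' : h ∈ GL(V_1), h' ∈ GL(V_2) with h' G_2 h'^{-1} = G_2}; that is, N_{GL(V)}(1 ⊗ G_2) = GL(V_1) ⊗ N_{GL(V_2)}(G_2). -/

import Mathlib

open scoped TensorProduct

section Aux

variable (F V₁ V₂ : Type) [Field F]
    [AddCommGroup V₁] [Module F V₁] [FiniteDimensional F V₁]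
    [AddCommGroup V₂] [Module F V₂] [FiniteDimensional F V₂]

/-- The canonical equivalence `V₁ ⊗ V₂ ≃ (V₁* →ₗ V₂)` in finite dimension. -/
noncomputable def auxPhi : (V₁ ⊗[F] V₂) ≃ₗ[F] (Module.Dual F V₁ →ₗ[F] V₂) :=
  (TensorProduct.congr (Module.evalEquiv F V₁) (LinearEquiv.refl F V₂)).trans
    (dualTensorHomEquiv F (Module.Dual F V₁) V₂)

variable {F V₁ V₂}

lemma auxPhi_tmul (v : V₁) (w : V₂) (l : Module.Dual F V₁) :
    auxPhi F V₁ V₂ (v ⊗ₜ[F] w) l = l v • w := by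
  simp [auxPhi, dualTensorHomEquiv, dualTensorHomEquivOfBasis_apply]

/-- `1 ⊗ g` as a monoid hom into the automorphisms of the tensor product. -/
noncomputable def auxC : (V₂ ≃ₗ[F] V₂) →* ((V₁ ⊗[F] V₂) ≃ₗ[F] (V₁ ⊗[F] V₂)) where
  toFun g := TensorProduct.congr (LinearEquiv.refl F V₁) g
  map_one' := TensorProduct.congr_refl_refl
  map_mul' g g' := by
    have h1 : (LinearEquiv.refl F V₁ : V₁ ≃ₗ[F] V₁) = 1 := rfl
    simp only [h1]
    simpa using TensorProduct.congr_mul 1 g 1 g'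

lemma auxC_apply_tmul (g : V₂ ≃ₗ[F] V₂) (v : V₁) (w : V₂) :
    (auxC g : (V₁ ⊗[F] V₂) ≃ₗ[F] (V₁ ⊗[F] V₂)) (v ⊗ₜ[F] w) = v ⊗ₜ[F] (g w) :=
  TensorProduct.congr_tmul _ _ _ _

lemma auxPhi_comm (g : V₂ ≃ₗ[F] V₂) (y : V₁ ⊗[F] V₂) (l : Module.Dual F V₁) :
    auxPhi F V₁ V₂ ((auxC g : (V₁ ⊗[F] V₂) ≃ₗ[F] (V₁ ⊗[F] V₂)) y) l
      = g (auxPhi F V₁ V₂ y l) := by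
  induction y using TensorProduct.induction_on with
  | zero => simp
  | tmul v w => rw [auxC_apply_tmul, auxPhi_tmul, auxPhi_tmul]; simp
  | add a b ha hb => simp [ha, hb]

lemma aux_tmul_ne_zero {v : V₁} {w : V₂} (hv : v ≠ 0) (hw : w ≠ 0) :
    v ⊗ₜ[F] w ≠ 0 := by
  intro h0
  obtain ⟨l, hl⟩ : ∃ l : Module.Dual F V₁, l v ≠ 0 := by
    by_contra hc
    push_neg at hc
    exact hv ((Module.forall_dual_apply_eq_zero_iff F v).mp hc)
  have := auxPhi_tmul (F := F) v w l
  rw [h0] at this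
  simp only [map_zero, LinearMap.zero_apply] at this
  exact hw (by simpa [smul_eq_zero, hl] using this.symm)

lemma aux_tmul_left_inj {v : V₁} (hv : v ≠ 0) {w w' : V₂}
    (h : v ⊗ₜ[F] w = v ⊗ₜ[F] w') : w = w' := by
  obtain ⟨l, hl⟩ : ∃ l : Module.Dual F V₁, l v ≠ 0 := by
    by_contra hc
    push_neg at hc
    exact hv ((Module.forall_dual_apply_eq_zero_iff F v).mp hc)
  have h2 := congrArg (fun x => auxPhi F V₁ V₂ x l) h
  simp only [auxPhi_tmul] at h2
  exact smul_right_injective V₂ hl h2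

lemma aux_mul_apply {M : Type} [AddCommGroup M] [Module F M] (a b : M ≃ₗ[F] M) (x : M) :
    (a * b) x = a (b x) := rfl

lemma auxC_inj {v : V₁} (hv : v ≠ 0) {a b : V₂ ≃ₗ[F] V₂}
    (h : (auxC (V₁ := V₁) a) = auxC (V₁ := V₁) b) : a = b := by
  ext w
  have h2 : (auxC (V₁ := V₁) a : (V₁ ⊗[F] V₂) ≃ₗ[F] (V₁ ⊗[F] V₂)) (v ⊗ₜ[F] w)
      = (auxC (V₁ := V₁) b : (V₁ ⊗[F] V₂) ≃ₗ[F] (V₁ ⊗[F] V₂)) (v ⊗ₜ[F] w) := by rw [h]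
  rw [auxC_apply_tmul, auxC_apply_tmul] at h2
  exact aux_tmul_left_inj hv h2

end Aux

/-- If `G₂ ≤ GL(V₂)` acts absolutely irreducibly on `V₂`, then the
normalizer in `GL(V₁ ⊗ V₂)` of `1 ⊗ G₂` is exactly `GL(V₁) ⊗ N_{GL(V₂)}(G₂)`. -/
theorem stmt_6 (F V₁ V₂ : Type) [Field F]
    [AddCommGroup V₁] [Module F V₁] [FiniteDimensional F V₁] [Nontrivial V₁]
    [AddCommGroup V₂] [Module F V₂] [FiniteDimensional F V₂] [Nontrivial V₂]
    (G₂ : Subgroup (V₂ ≃ₗ[F] V₂))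
    (hirr : ∀ W : Submodule F V₂, (∀ g ∈ G₂, ∀ v ∈ W, g v ∈ W) → W = ⊥ ∨ W = ⊤)
    (habs : ∀ φ : Module.End F V₂, (∀ g ∈ G₂, ∀ v : V₂, φ (g v) = g (φ v)) →
      ∃ c : F, φ = c • LinearMap.id)
    (S : Set ((V₁ ⊗[F] V₂) ≃ₗ[F] (V₁ ⊗[F] V₂)))
    (hS : S = {x | ∃ g ∈ G₂, x = TensorProduct.congr (LinearEquiv.refl F V₁) g}) :
    {h : (V₁ ⊗[F] V₂) ≃ₗ[F] (V₁ ⊗[F] V₂) | (fun x => h * x * h⁻¹) '' S = S} =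
      {h | ∃ (e : V₁ ≃ₗ[F] V₁) (e' : V₂ ≃ₗ[F] V₂),
        e' ∈ Subgroup.normalizer (G₂ : Set (V₂ ≃ₗ[F] V₂)) ∧ h = TensorProduct.congr e e'} := by
  classical
  have hSC : S = {x | ∃ g ∈ G₂, x = auxC (V₁ := V₁) g} := hS
  clear hS
  subst hSC
  have mulapp : ∀ (a b : (V₁ ⊗[F] V₂) ≃ₗ[F] (V₁ ⊗[F] V₂)) x, (a * b) x = a (b x) :=
    fun _ _ _ => rfl
  obtain ⟨v₀, hv₀⟩ : ∃ v : V₁, v ≠ 0 := exists_ne 0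
  obtain ⟨w₀, hw₀⟩ : ∃ w : V₂, w ≠ 0 := exists_ne 0
  set Φ := auxPhi F V₁ V₂ with hΦ
  ext h
  simp only [Set.mem_setOf_eq]
  constructor
  · -- hard direction
    intro hc
    have hfwd : ∀ g ∈ G₂, ∃ g' ∈ G₂, h * auxC (V₁ := V₁) g * h⁻¹ = auxC (V₁ := V₁) g' := by
      intro g hg
      have hmem : h * auxC (V₁ := V₁) g * h⁻¹ ∈
          {x | ∃ g ∈ G₂, x = auxC (V₁ := V₁) g} := by
        rw [← hc]
        exact Set.mem_image_of_mem _ ⟨g, hg, rfl⟩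
      obtain ⟨g', hg', heq⟩ := hmem
      exact ⟨g', hg', heq⟩
    have hbwd : ∀ g' ∈ G₂, ∃ g ∈ G₂, h * auxC (V₁ := V₁) g * h⁻¹ = auxC (V₁ := V₁) g' := by
      intro g' hg'
      have hmem : auxC (V₁ := V₁) g' ∈
          (fun x => h * x * h⁻¹) '' {x | ∃ g ∈ G₂, x = auxC (V₁ := V₁) g} := by
        rw [hc]; exact ⟨g', hg', rfl⟩
      obtain ⟨y, ⟨g, hg, rfl⟩, heq⟩ := hmem
      exact ⟨g, hg, heq⟩
    choose σ hσmem hσeq using hfwd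
    -- commutation relation: h ∘ (1⊗g) = (1⊗σ g) ∘ h
    have hcomm0 : ∀ (g : V₂ ≃ₗ[F] V₂) (hg : g ∈ G₂),
        h * auxC (V₁ := V₁) g = auxC (V₁ := V₁) (σ g hg) * h := by
      intro g hg
      have := hσeq g hg
      calc h * auxC (V₁ := V₁) g = (h * auxC (V₁ := V₁) g * h⁻¹) * h := by group
        _ = auxC (V₁ := V₁) (σ g hg) * h := by rw [this]
    -- construct the intertwiner f
    have hx : h (v₀ ⊗ₜ[F] w₀) ≠ 0 := by
      intro h0
      exact aux_tmul_ne_zero hv₀ hw₀ (by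
        have := congrArg h.symm h0
        simpa using this)
    obtain ⟨lam, hlam⟩ : ∃ l : Module.Dual F V₁, Φ (h (v₀ ⊗ₜ[F] w₀)) l ≠ 0 := by
      by_contra hcon
      push_neg at hcon
      have : Φ (h (v₀ ⊗ₜ[F] w₀)) = 0 := LinearMap.ext fun l => hcon l
      exact hx (by simpa using Φ.map_eq_zero_iff.mp (by simpa using this))
    set f : V₂ →ₗ[F] V₂ :=
      ((Φ.toLinearMap ∘ₗ h.toLinearMap) ∘ₗ TensorProduct.mk F V₁ V₂ v₀).flip lam with hf
    have hfw : ∀ w, f w = Φ (h (v₀ ⊗ₜ[F] w)) lam := fun w => rfl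
    have hfint : ∀ (g : V₂ ≃ₗ[F] V₂) (hg : g ∈ G₂) (w : V₂),
        f (g w) = σ g hg (f w) := by
      intro g hg w
      rw [hfw, hfw]
      have h1 : v₀ ⊗ₜ[F] (g w) = (auxC (V₁ := V₁) g : _ ≃ₗ[F] _) (v₀ ⊗ₜ[F] w) :=
        (auxC_apply_tmul g v₀ w).symm
      rw [h1, ← mulapp h (auxC (V₁ := V₁) g), hcomm0 g hg, mulapp, auxPhi_comm]
    -- f is injective
    have hfinj : Function.Injective f := by
      rw [← LinearMap.ker_eq_bot]
      rcases hirr (LinearMap.ker f) (by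
        intro g hg w hw
        simp only [LinearMap.mem_ker] at hw ⊢
        rw [hfint g hg w, hw, map_zero]) with hbot | htop
      · exact hbot
      · exfalso
        have : f w₀ = 0 := by rw [← LinearMap.mem_ker, htop]; trivial
        rw [hfw] at this; exact hlam this
    set e' : V₂ ≃ₗ[F] V₂ := f.linearEquivOfInjective hfinj rfl with he'def
    have he'w : ∀ w, e' w = f w := fun w => LinearMap.linearEquivOfInjective_apply hfinj rfl w
    have hkey : ∀ (g : V₂ ≃ₗ[F] V₂) (hg : g ∈ G₂), e' * g * e'⁻¹ = σ g hg := by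
      intro g hg
      have h1 : e' * g = σ g hg * e' := by
        ext w
        rw [aux_mul_apply, aux_mul_apply, he'w, he'w, hfint g hg]
      calc e' * g * e'⁻¹ = (σ g hg * e') * e'⁻¹ := by rw [h1]
        _ = σ g hg := by group
    have he'norm : e' ∈ Subgroup.normalizer (G₂ : Set (V₂ ≃ₗ[F] V₂)) := by
      rw [Subgroup.mem_normalizer_iff]
      intro g
      constructor
      · intro hg; rw [hkey g hg]; exact hσmem g hg
      · intro hmem
        obtain ⟨g₀, hg₀, heq⟩ := hbwd _ hmem
        have : σ g₀ hg₀ = e' * g * e'⁻¹ := by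
          apply auxC_inj (F := F) hv₀
          rw [← hσeq g₀ hg₀, heq]
        have hgg : g₀ = g := by
          have := (hkey g₀ hg₀).trans this
          exact mul_left_cancel (mul_right_cancel this)
        rwa [← hgg]
    -- the commutant element
    set k : (V₁ ⊗[F] V₂) ≃ₗ[F] (V₁ ⊗[F] V₂) := (auxC (V₁ := V₁) e')⁻¹ * h with hk
    have hkcomm : ∀ (g : V₂ ≃ₗ[F] V₂), g ∈ G₂ →
        k * auxC (V₁ := V₁) g = auxC (V₁ := V₁) g * k := by
      intro g hg
      have h1 : e'⁻¹ * σ g hg = g * e'⁻¹ := by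
        rw [← hkey g hg]; group
      calc k * auxC (V₁ := V₁) g
          = (auxC (V₁ := V₁) e')⁻¹ * (h * auxC (V₁ := V₁) g) := by rw [hk]; group
        _ = (auxC (V₁ := V₁) e')⁻¹ * (auxC (V₁ := V₁) (σ g hg) * h) := by rw [hcomm0 g hg]
        _ = auxC (V₁ := V₁) (e'⁻¹ * σ g hg) * h := by
            rw [map_mul, map_inv]; group
        _ = auxC (V₁ := V₁) (g * e'⁻¹) * h := by rw [h1]
        _ = auxC (V₁ := V₁) g * k := by rw [map_mul, map_inv, hk]; group
    -- choose a normalized dual functional on V₂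
    obtain ⟨μ, hμ⟩ : ∃ μ : Module.Dual F V₂, μ w₀ = 1 := by
      obtain ⟨μ₀, hμ₀⟩ : ∃ μ₀ : Module.Dual F V₂, μ₀ w₀ ≠ 0 := by
        by_contra hcon
        push_neg at hcon
        exact hw₀ ((Module.forall_dual_apply_eq_zero_iff F w₀).mp hcon)
      exact ⟨(μ₀ w₀)⁻¹ • μ₀, by simp [inv_mul_cancel₀ hμ₀]⟩
    -- define ψ : V₁ →ₗ V₁
    set B : V₁ →ₗ[F] Module.Dual F (Module.Dual F V₁) :=
      (LinearMap.llcomp F (Module.Dual F V₁) V₂ F μ) ∘ₗ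
        ((Φ.toLinearMap ∘ₗ k.toLinearMap) ∘ₗ (TensorProduct.mk F V₁ V₂).flip w₀) with hB
    set ψ : V₁ →ₗ[F] V₁ := (Module.evalEquiv F V₁).symm.toLinearMap ∘ₗ B with hψ
    have hψl : ∀ (v : V₁) (l : Module.Dual F V₁),
        l (ψ v) = μ (Φ (k (v ⊗ₜ[F] w₀)) l) := by
      intro v l
      have : l ((Module.evalEquiv F V₁).symm (B v)) = B v l :=
        Module.apply_evalEquiv_symm_apply F V₁ l (B v)
      simpa [hψ, hB] using this
    -- the main claim : k (v ⊗ w) = ψ v ⊗ w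
    have hclaim : ∀ (v : V₁) (w : V₂), k (v ⊗ₜ[F] w) = (ψ v) ⊗ₜ[F] w := by
      intro v w
      apply Φ.injective
      apply LinearMap.ext
      intro l
      set φv : Module.End F V₂ :=
        ((Φ.toLinearMap ∘ₗ k.toLinearMap) ∘ₗ TensorProduct.mk F V₁ V₂ v).flip l with hφv
      have hφvw : ∀ w, φv w = Φ (k (v ⊗ₜ[F] w)) l := fun _ => rfl
      obtain ⟨c, hcval⟩ := habs φv (by
        intro g hg u
        rw [hφvw, hφvw]
        have h1 : v ⊗ₜ[F] (g u) = (auxC (V₁ := V₁) g : _ ≃ₗ[F] _) (v ⊗ₜ[F] u) :=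
          (auxC_apply_tmul g v u).symm
        rw [h1, ← mulapp k (auxC (V₁ := V₁) g), hkcomm g hg, mulapp, auxPhi_comm])
      have hcw : ∀ u, Φ (k (v ⊗ₜ[F] u)) l = c • u := by
        intro u
        rw [← hφvw, hcval]; rfl
      have hcψ : c = l (ψ v) := by
        rw [hψl v l, hcw w₀, map_smul, hμ, smul_eq_mul, mul_one]
      rw [hcw w, auxPhi_tmul, ← hcψ]
    -- ψ is injective
    have hψinj : Function.Injective ψ := by
      rw [injective_iff_map_eq_zero]
      intro v hv
      by_contra hvne
      have h0 : k (v ⊗ₜ[F] w₀) = 0 := by rw [hclaim, hv, TensorProduct.zero_tmul]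
      exact aux_tmul_ne_zero hvne hw₀ (by
        have := congrArg k.symm h0
        simpa using this)
    set e : V₁ ≃ₗ[F] V₁ := ψ.linearEquivOfInjective hψinj rfl with hedef
    have hew : ∀ v, e v = ψ v := fun v => LinearMap.linearEquivOfInjective_apply hψinj rfl v
    have hkeq : k = TensorProduct.congr e (LinearEquiv.refl F V₂) := by
      apply LinearEquiv.toLinearMap_injective
      apply TensorProduct.ext'
      intro v w
      simp only [LinearEquiv.coe_coe, TensorProduct.congr_tmul, LinearEquiv.refl_apply]
      rw [hclaim, hew]
    refine ⟨e, e', he'norm, ?_⟩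
    have : h = auxC (V₁ := V₁) e' * k := by rw [hk]; group
    rw [this, hkeq]
    show _ = TensorProduct.congr e e'
    rw [auxC]
    simp only [MonoidHom.coe_mk, OneHom.coe_mk]
    have h1 : (LinearEquiv.refl F V₁ : V₁ ≃ₗ[F] V₁) = 1 := rfl
    have h2 : (LinearEquiv.refl F V₂ : V₂ ≃ₗ[F] V₂) = 1 := rfl
    rw [h1, h2, ← TensorProduct.congr_mul, one_mul, mul_one]
  · -- easy direction
    rintro ⟨e, e', he', rfl⟩
    have hconj : ∀ g : V₂ ≃ₗ[F] V₂,
        TensorProduct.congr e e' * auxC (V₁ := V₁) g * (TensorProduct.congr e e')⁻¹ =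
          auxC (V₁ := V₁) (e' * g * e'⁻¹) := by
      intro g
      have hinv : (TensorProduct.congr e e')⁻¹ = TensorProduct.congr e⁻¹ e'⁻¹ := rfl
      have h1 : (LinearEquiv.refl F V₁ : V₁ ≃ₗ[F] V₁) = 1 := rfl
      show TensorProduct.congr e e' * TensorProduct.congr (LinearEquiv.refl F V₁) g * _ =
        TensorProduct.congr (LinearEquiv.refl F V₁) (e' * g * e'⁻¹)
      rw [hinv, h1, ← TensorProduct.congr_mul, ← TensorProduct.congr_mul]
      congr 1
      group
    ext x
    simp only [Set.mem_image, Set.mem_setOf_eq]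
    constructor
    · rintro ⟨y, ⟨g, hg, rfl⟩, rfl⟩
      exact ⟨e' * g * e'⁻¹, (Subgroup.mem_normalizer_iff.mp he' g).mp hg, hconj g⟩
    · rintro ⟨g', hg', rfl⟩
      refine ⟨auxC (V₁ := V₁) (e'⁻¹ * g' * e'), ⟨e'⁻¹ * g' * e', ?_, rfl⟩, ?_⟩
      · have := (Subgroup.mem_normalizer_iff.mp (inv_mem he') g').mp hg'
        simpa using this
      · rw [hconj]
        congr 1
        group
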